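/- arXiv:2205.03965 — 3 statements merged into one kernel-verified Lean document; each statement's English description precedes it below -/
import Mathlib

section
/- For every positive integer n there exists a connected graph G with exactly ⌊(5n−1)/2⌋ edges such that G → (nK₂, P₃). Concretely: if n is even, the graph obtained from n/2 disjoint copies of the 4-cycle C₄ by adding n/2 − 1 edges to make it connected has this property; if n is odd, the graph obtained from (n−1)/2 disjoint copies of C₄ together with one copy of P₃ by adding (n−1)/2 edges to make it connected has this property. -/
open SimpleGraph

/-- `G` contains a copy of `H`, i.e. there is an injective graph homomorphism from `H` to `G`. -/
def ContainsCopy {V W : Type*} (G : SimpleGraph V) (H : SimpleGraph W) : Prop :=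
  ∃ f : H →g G, Function.Injective f

/-- `G` arrows `(G₁, G₂)`: for every red/blue colouring of the edges of `G`
(given by a subgraph `R ≤ G` of red edges, the blue edges being `G \ R`),
there is a red copy of `G₁` or a blue copy of `G₂`. -/
def Arrows {V V₁ V₂ : Type*} (G : SimpleGraph V) (G₁ : SimpleGraph V₁) (G₂ : SimpleGraph V₂) :
    Prop :=
  ∀ R : SimpleGraph V, R ≤ G → ContainsCopy R G₁ ∨ ContainsCopy (G \ R) G₂

/-- The matching `nK₂` with `n` edges. -/
def Matching (n : ℕ) : SimpleGraph (Fin n × Fin 2) where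
  Adj a b := a.1 = b.1 ∧ a.2 ≠ b.2
  symm := by constructor; intro a b h; exact ⟨h.1.symm, h.2.symm⟩
  loopless := by constructor; intro a h; exact h.2 rfl

/-- `n` disjoint copies of the graph `H`. -/
def Copies (n : ℕ) {W : Type*} (H : SimpleGraph W) : SimpleGraph (Fin n × W) where
  Adj a b := a.1 = b.1 ∧ H.Adj a.2 b.2
  symm := by constructor; intro a b h; exact ⟨h.1.symm, h.2.symm⟩
  loopless := by constructor; intro a h; exact H.loopless.irrefl _ h.2

/-- Disjoint union of two graphs. -/
def DisjUnion {V W : Type*} (G : SimpleGraph V) (H : SimpleGraph W) : SimpleGraph (V ⊕ W) where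
  Adj a b :=
    match a, b with
    | Sum.inl x, Sum.inl y => G.Adj x y
    | Sum.inr x, Sum.inr y => H.Adj x y
    | _, _ => False
  symm := by
    constructor
    rintro (x | x) (y | y) h
    · exact G.symm.symm _ _ h
    · exact h.elim
    · exact h.elim
    · exact H.symm.symm _ _ h
  loopless := by
    constructor
    rintro (x | x) h
    · exact G.loopless.irrefl _ h
    · exact H.loopless.irrefl _ h

section AuxProof
lemma noP3 {V : Type*} {B : SimpleGraph V} (h : ¬ ContainsCopy B (pathGraph 3)) :
    ∀ u v w, B.Adj u v → B.Adj v w → u = w := by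
  intro u v w huv hvw
  by_contra hne
  apply h
  refine ⟨⟨![u, v, w], ?_⟩, ?_⟩
  · intro a b hab
    fin_cases a <;> fin_cases b <;>
      simp only [pathGraph_adj] at hab <;>
      simp only [Matrix.cons_val_zero, Matrix.cons_val_one, Matrix.head_cons,
        Matrix.cons_val_two, Matrix.tail_cons] <;>
      first
        | exact huv | exact huv.symm | exact hvw | exact hvw.symm | omega
  · intro a b hab
    have h01 : u ≠ v := huv.ne
    have h12 : v ≠ w := hvw.ne
    fin_cases a <;> fin_cases b <;> simp_all <;> tauto

lemma pairRed {V : Type*} {G R : SimpleGraph V} (hR : R ≤ G)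
    (hB : ∀ u v w, (G \ R).Adj u v → (G \ R).Adj v w → u = w)
    {a0 a1 a2 a3 : V} (h01 : G.Adj a0 a1) (h12 : G.Adj a1 a2) (h23 : G.Adj a2 a3)
    (h30 : G.Adj a3 a0) (h02 : a0 ≠ a2) (h13 : a1 ≠ a3) :
    (R.Adj a0 a1 ∧ R.Adj a2 a3) ∨ (R.Adj a1 a2 ∧ R.Adj a3 a0) := by
  by_contra hc
  have hc1 : ¬R.Adj a0 a1 ∨ ¬R.Adj a2 a3 := by tauto
  have hc2 : ¬R.Adj a1 a2 ∨ ¬R.Adj a3 a0 := by tauto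
  rcases hc1 with hc1 | hc1 <;> rcases hc2 with hc2 | hc2
  · exact h02 (hB a0 a1 a2 ⟨h01, hc1⟩ ⟨h12, hc2⟩)
  · exact h13 (hB a1 a0 a3 ⟨h01.symm, fun hx => hc1 hx.symm⟩ ⟨h30.symm, fun hx => hc2 hx.symm⟩)
  · exact h13 (hB a1 a2 a3 ⟨h12, hc2⟩ ⟨h23, hc1⟩)
  · exact h02 (hB a0 a3 a2 ⟨h30.symm, fun hx => hc2 hx.symm⟩ ⟨h23.symm, fun hx => hc1 hx.symm⟩)

lemma edgeRed {V : Type*} {G R : SimpleGraph V} (hR : R ≤ G)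
    (hB : ∀ u v w, (G \ R).Adj u v → (G \ R).Adj v w → u = w)
    {a0 a1 a2 : V} (h01 : G.Adj a0 a1) (h12 : G.Adj a1 a2) (h02 : a0 ≠ a2) :
    R.Adj a0 a1 ∨ R.Adj a1 a2 := by
  by_contra hc
  push_neg at hc
  exact h02 (hB a0 a1 a2 ⟨h01, hc.1⟩ ⟨h12, hc.2⟩)

lemma containsMatching {V : Type*} (R : SimpleGraph V) (n : ℕ) (g : Fin n × Fin 2 → V)
    (hinj : Function.Injective g) (hadj : ∀ j : Fin n, R.Adj (g (j, 0)) (g (j, 1))) :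
    ContainsCopy R (Matching n) := by
  refine ⟨⟨g, ?_⟩, hinj⟩
  rintro ⟨j, s⟩ ⟨j', s'⟩ ⟨h1, h2⟩
  dsimp only at h1 h2
  subst h1
  fin_cases s <;> fin_cases s' <;> simp only at h2 ⊢
  · exact absurd rfl h2
  · exact hadj j
  · exact (hadj j).symm
  · exact absurd rfl h2

def pos (b : Bool) (e s : Fin 2) : Fin 4 :=
  if b then ⟨2 * e.val + s.val, by omega⟩ else ⟨(2 * e.val + s.val + 1) % 4, by omega⟩

lemma posInj (b : Bool) : Function.Injective (fun p : Fin 2 × Fin 2 => pos b p.1 p.2) := by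
  revert b; decide

lemma arrowsEven {k n : ℕ} (hn : n = 2 * k) (G : SimpleGraph (Fin k × Fin 4))
    (hle : Copies k (cycleGraph 4) ≤ G) : Arrows G (Matching n) (pathGraph 3) := by
  classical
  intro R hR
  by_cases hP : ContainsCopy (G \ R) (pathGraph 3)
  · exact Or.inr hP
  left
  have hB := noP3 hP
  have gadj : ∀ (i : Fin k) (a b : Fin 4), (cycleGraph 4).Adj a b → G.Adj (i, a) (i, b) :=
    fun i a b h => hle ⟨rfl, h⟩
  have key : ∀ i : Fin k,
      (R.Adj (i, 0) (i, 1) ∧ R.Adj (i, 2) (i, 3)) ∨ (R.Adj (i, 1) (i, 2) ∧ R.Adj (i, 3) (i, 0)) :=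
    fun i => pairRed hR hB (gadj i 0 1 (by decide)) (gadj i 1 2 (by decide))
      (gadj i 2 3 (by decide)) (gadj i 3 0 (by decide)) (by simp) (by simp)
  set b : Fin k → Bool := fun i =>
    if R.Adj (i, 0) (i, 1) ∧ R.Adj (i, 2) (i, 3) then true else false with hbdef
  have hbt : ∀ i, b i = true → R.Adj (i, 0) (i, 1) ∧ R.Adj (i, 2) (i, 3) := by
    intro i h
    by_contra hc
    simp [hbdef, hc] at h
  have hbf : ∀ i, b i = false → R.Adj (i, 1) (i, 2) ∧ R.Adj (i, 3) (i, 0) := by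
    intro i h
    rcases key i with hk | hk
    · simp [hbdef, hk] at h
    · exact hk
  have hlt : ∀ j : Fin n, j.val / 2 < k := fun j => by have := j.isLt; omega
  set idx : Fin n → Fin k := fun j => ⟨j.val / 2, hlt j⟩ with hidx
  set g : Fin n × Fin 2 → Fin k × Fin 4 :=
    fun p => (idx p.1, pos (b (idx p.1)) ⟨p.1.val % 2, by omega⟩ p.2) with hg
  apply containsMatching R n g
  · rintro ⟨j, s⟩ ⟨j', s'⟩ h
    simp only [hg, Prod.mk.injEq] at h
    obtain ⟨h1, h2⟩ := h
    rw [h1] at h2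
    have h3 := posInj (b (idx j')) (a₁ := (⟨j.val % 2, by omega⟩, s))
      (a₂ := (⟨j'.val % 2, by omega⟩, s')) h2
    have h4 : j.val % 2 = j'.val % 2 := congrArg (fun p => (Prod.fst p : Fin 2).val) h3
    have h5 : s = s' := congrArg Prod.snd h3
    have h6 : j.val / 2 = j'.val / 2 := congrArg Fin.val h1
    have : j = j' := Fin.ext (by omega)
    rw [this, h5]
  · intro j
    simp only [hg]
    rcases (by omega : j.val % 2 = 0 ∨ j.val % 2 = 1) with he | he <;>
      cases hbv : b (idx j)
    · have h1 : (⟨j.val % 2, by omega⟩ : Fin 2) = 0 := Fin.ext he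
      rw [h1]
      have e0 : pos false 0 0 = 1 := by decide
      have e1 : pos false 0 1 = 2 := by decide
      rw [e0, e1]
      exact (hbf _ hbv).1
    · have h1 : (⟨j.val % 2, by omega⟩ : Fin 2) = 0 := Fin.ext he
      rw [h1]
      have e0 : pos true 0 0 = 0 := by decide
      have e1 : pos true 0 1 = 1 := by decide
      rw [e0, e1]
      exact (hbt _ hbv).1
    · have h1 : (⟨j.val % 2, by omega⟩ : Fin 2) = 1 := Fin.ext he
      rw [h1]
      have e0 : pos false 1 0 = 3 := by decide
      have e1 : pos false 1 1 = 0 := by decide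
      rw [e0, e1]
      exact (hbf _ hbv).2
    · have h1 : (⟨j.val % 2, by omega⟩ : Fin 2) = 1 := Fin.ext he
      rw [h1]
      have e0 : pos true 1 0 = 2 := by decide
      have e1 : pos true 1 1 = 3 := by decide
      rw [e0, e1]
      exact (hbt _ hbv).2

def p3pos (c : Bool) (s : Fin 2) : Fin 3 :=
  if c then ⟨s.val, by omega⟩ else ⟨s.val + 1, by omega⟩

lemma p3posInj (c : Bool) : Function.Injective (p3pos c) := by
  revert c; decide

lemma arrowsOdd {k n : ℕ} (hn : n = 2 * k + 1)
    (G : SimpleGraph ((Fin k × Fin 4) ⊕ Fin 3))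
    (hle : DisjUnion (Copies k (cycleGraph 4)) (pathGraph 3) ≤ G) :
    Arrows G (Matching n) (pathGraph 3) := by
  classical
  intro R hR
  by_cases hP : ContainsCopy (G \ R) (pathGraph 3)
  · exact Or.inr hP
  left
  have hB := noP3 hP
  have gadj : ∀ (i : Fin k) (a b : Fin 4), (cycleGraph 4).Adj a b →
      G.Adj (Sum.inl (i, a)) (Sum.inl (i, b)) :=
    fun i a b h => hle (show (Copies k (cycleGraph 4)).Adj (i, a) (i, b) from ⟨rfl, h⟩)
  have padj : ∀ a b : Fin 3, (pathGraph 3).Adj a b → G.Adj (Sum.inr a) (Sum.inr b) :=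
    fun a b h => hle h
  have key : ∀ i : Fin k,
      (R.Adj (Sum.inl (i, 0)) (Sum.inl (i, 1)) ∧ R.Adj (Sum.inl (i, 2)) (Sum.inl (i, 3))) ∨
      (R.Adj (Sum.inl (i, 1)) (Sum.inl (i, 2)) ∧ R.Adj (Sum.inl (i, 3)) (Sum.inl (i, 0))) :=
    fun i => pairRed hR hB (gadj i 0 1 (by decide)) (gadj i 1 2 (by decide))
      (gadj i 2 3 (by decide)) (gadj i 3 0 (by decide)) (by simp) (by simp)
  have cedge : R.Adj (Sum.inr 0) (Sum.inr 1) ∨ R.Adj (Sum.inr 1) (Sum.inr 2) :=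
    edgeRed hR hB (padj 0 1 (pathGraph_adj.mpr (by omega)))
      (padj 1 2 (pathGraph_adj.mpr (by omega))) (by simp)
  set b : Fin k → Bool := fun i =>
    if R.Adj (Sum.inl (i, 0)) (Sum.inl (i, 1)) ∧ R.Adj (Sum.inl (i, 2)) (Sum.inl (i, 3))
    then true else false with hbdef
  have hbt : ∀ i, b i = true →
      R.Adj (Sum.inl (i, 0)) (Sum.inl (i, 1)) ∧ R.Adj (Sum.inl (i, 2)) (Sum.inl (i, 3)) := by
    intro i h
    by_contra hc
    simp [hbdef, hc] at h
  have hbf : ∀ i, b i = false →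
      R.Adj (Sum.inl (i, 1)) (Sum.inl (i, 2)) ∧ R.Adj (Sum.inl (i, 3)) (Sum.inl (i, 0)) := by
    intro i h
    rcases key i with hk | hk
    · simp [hbdef, hk] at h
    · exact hk
  set c : Bool := if R.Adj (Sum.inr 0) (Sum.inr 1) then true else false with hcdef
  have hct : c = true → R.Adj (Sum.inr 0) (Sum.inr 1) := by
    intro h; by_contra hc; simp [hcdef, hc] at h
  have hcf : c = false → R.Adj (Sum.inr 1) (Sum.inr 2) := by
    intro h
    rcases cedge with hk | hk
    · simp [hcdef, hk] at h
    · exact hk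
  set g : Fin n × Fin 2 → (Fin k × Fin 4) ⊕ Fin 3 := fun p =>
    if h : p.1.val < 2 * k then
      Sum.inl (⟨p.1.val / 2, by omega⟩, pos (b ⟨p.1.val / 2, by omega⟩) ⟨p.1.val % 2, by omega⟩ p.2)
    else Sum.inr (p3pos c p.2) with hg
  have gpos : ∀ (j : Fin n) (hj : j.val < 2 * k) (s : Fin 2),
      g (j, s) = Sum.inl (⟨j.val / 2, by omega⟩,
        pos (b ⟨j.val / 2, by omega⟩) ⟨j.val % 2, by omega⟩ s) := by
    intro j hj s
    simp only [hg]
    rw [dif_pos hj]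
  have gneg : ∀ (j : Fin n) (hj : ¬ j.val < 2 * k) (s : Fin 2),
      g (j, s) = Sum.inr (p3pos c s) := by
    intro j hj s
    simp only [hg]
    rw [dif_neg hj]
  apply containsMatching R n g
  · rintro ⟨j, s⟩ ⟨j', s'⟩ h
    by_cases hj : j.val < 2 * k <;> by_cases hj' : j'.val < 2 * k
    · rw [gpos j hj s, gpos j' hj' s'] at h
      have h' := Sum.inl_injective h
      obtain ⟨h1, h2⟩ := Prod.mk.injEq .. ▸ h'
      have h6 : j.val / 2 = j'.val / 2 := congrArg Fin.val h1
      rw [h1] at h2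
      have h3 := posInj (b ⟨j'.val / 2, by omega⟩) (a₁ := (⟨j.val % 2, by omega⟩, s))
        (a₂ := (⟨j'.val % 2, by omega⟩, s')) h2
      have h4 : j.val % 2 = j'.val % 2 := congrArg (fun p => (Prod.fst p : Fin 2).val) h3
      have h5 : s = s' := congrArg Prod.snd h3
      have : j = j' := Fin.ext (by omega)
      rw [this, h5]
    · rw [gpos j hj s, gneg j' hj' s'] at h
      exact absurd h (by simp)
    · rw [gneg j hj s, gpos j' hj' s'] at h
      exact absurd h (by simp)
    · rw [gneg j hj s, gneg j' hj' s'] at h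
      have h5 : s = s' := p3posInj c (Sum.inr_injective h)
      have : j = j' := Fin.ext (by omega)
      rw [this, h5]
  · intro j
    by_cases hj : j.val < 2 * k
    · rw [gpos j hj 0, gpos j hj 1]
      rcases (by omega : j.val % 2 = 0 ∨ j.val % 2 = 1) with he | he <;>
        cases hbv : b ⟨j.val / 2, by omega⟩
      · have h1 : (⟨j.val % 2, by omega⟩ : Fin 2) = 0 := Fin.ext he
        rw [h1]
        have e0 : pos false 0 0 = 1 := by decide
        have e1 : pos false 0 1 = 2 := by decide
        rw [e0, e1]
        exact (hbf _ hbv).1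
      · have h1 : (⟨j.val % 2, by omega⟩ : Fin 2) = 0 := Fin.ext he
        rw [h1]
        have e0 : pos true 0 0 = 0 := by decide
        have e1 : pos true 0 1 = 1 := by decide
        rw [e0, e1]
        exact (hbt _ hbv).1
      · have h1 : (⟨j.val % 2, by omega⟩ : Fin 2) = 1 := Fin.ext he
        rw [h1]
        have e0 : pos false 1 0 = 3 := by decide
        have e1 : pos false 1 1 = 0 := by decide
        rw [e0, e1]
        exact (hbf _ hbv).2
      · have h1 : (⟨j.val % 2, by omega⟩ : Fin 2) = 1 := Fin.ext he
        rw [h1]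
        have e0 : pos true 1 0 = 2 := by decide
        have e1 : pos true 1 1 = 3 := by decide
        rw [e0, e1]
        exact (hbt _ hbv).2
    · rw [gneg j hj 0, gneg j hj 1]
      cases hcv : c
      · have e0 : p3pos false 0 = 1 := by decide
        have e1 : p3pos false 1 = 2 := by decide
        rw [e0, e1]
        exact hcf hcv
      · have e0 : p3pos true 0 = 0 := by decide
        have e1 : p3pos true 1 = 1 := by decide
        rw [e0, e1]
        exact hct hcv

/-- connector for the even case -/
def connE (k : ℕ) : SimpleGraph (Fin k × Fin 4) :=
  fromRel (fun a b => a.2 = 0 ∧ b.2 = 0 ∧ a.1.val + 1 = b.1.val)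

def GE (k : ℕ) : SimpleGraph (Fin k × Fin 4) := Copies k (cycleGraph 4) ⊔ connE k

def phiE (k : ℕ) : Fin k × Fin 4 → Sym2 (Fin k × Fin 4) :=
  fun p => s((p.1, p.2), (p.1, p.2 + 1))

def psiE (k : ℕ) : Fin (k - 1) → Sym2 (Fin k × Fin 4) :=
  fun t => s(((⟨t.val, by omega⟩ : Fin k), 0), ((⟨t.val + 1, by omega⟩ : Fin k), 0))

lemma copies_edgeSet (k : ℕ) :
    (Copies k (cycleGraph 4)).edgeSet = Set.range (phiE k) := by
  ext e
  induction e using Sym2.ind with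
  | _ a b =>
    simp only [mem_edgeSet, Set.mem_range]
    constructor
    · rintro ⟨h1, h2⟩
      obtain ⟨x, hx⟩ :=
        (by decide : ∀ u v : Fin 4, (cycleGraph 4).Adj u v → ∃ x : Fin 4, s(x, x + 1) = s(u, v))
          a.2 b.2 h2
      refine ⟨(a.1, x), ?_⟩
      have : Sym2.map (Prod.mk a.1) s(x, x + 1) = Sym2.map (Prod.mk a.1) s(a.2, b.2) :=
        congrArg _ hx
      simp only [Sym2.map_pair_eq] at this
      rw [phiE]
      rw [this]
      obtain ⟨a1, a2⟩ := a
      obtain ⟨b1, b2⟩ := b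
      simp only at h1
      rw [h1]
    · rintro ⟨⟨i, x⟩, h⟩
      rw [← mem_edgeSet, ← h, phiE, mem_edgeSet]
      exact ⟨rfl, (by decide : ∀ y : Fin 4, (cycleGraph 4).Adj y (y + 1)) x⟩

lemma phiE_inj (k : ℕ) : Function.Injective (phiE k) := by
  rintro ⟨i, x⟩ ⟨i', x'⟩ h
  rw [phiE, phiE, Sym2.eq_iff] at h
  rcases h with ⟨h1, h2⟩ | ⟨h1, h2⟩
  · obtain ⟨hi, hx⟩ := Prod.mk.injEq .. ▸ h1
    exact Prod.ext hi hx
  · obtain ⟨hi, hx⟩ := Prod.mk.injEq .. ▸ h1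
    obtain ⟨hi', hx'⟩ := Prod.mk.injEq .. ▸ h2
    have : x = x' := (by decide : ∀ x x' : Fin 4, x = x' + 1 → x + 1 = x' → x = x') x x' hx hx'
    exact Prod.ext hi this

lemma connE_edgeSet (k : ℕ) : (connE k).edgeSet = Set.range (psiE k) := by
  ext e
  induction e using Sym2.ind with
  | _ a b =>
    simp only [mem_edgeSet, Set.mem_range]
    constructor
    · rw [connE, fromRel_adj]
      rintro ⟨hne, h | h⟩
      · obtain ⟨h1, h2, h3⟩ := h
        have hb := b.1.isLt
        refine ⟨⟨a.1.val, by omega⟩, ?_⟩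
        rw [psiE]
        have ea : ((⟨a.1.val, by omega⟩ : Fin k), (0 : Fin 4)) = a := by
          obtain ⟨a1, a2⟩ := a; simp only at h1 ⊢; rw [h1]
        have eb : ((⟨a.1.val + 1, by omega⟩ : Fin k), (0 : Fin 4)) = b := by
          obtain ⟨b1, b2⟩ := b; simp only at h2 h3 ⊢
          rw [h2]
          congr 1
          exact Fin.ext h3
        rw [ea, eb]
      · obtain ⟨h1, h2, h3⟩ := h
        have ha := a.1.isLt
        refine ⟨⟨b.1.val, by omega⟩, ?_⟩
        rw [psiE]
        have ea : ((⟨b.1.val, by omega⟩ : Fin k), (0 : Fin 4)) = b := by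
          obtain ⟨b1, b2⟩ := b; simp only at h1 ⊢; rw [h1]
        have eb : ((⟨b.1.val + 1, by omega⟩ : Fin k), (0 : Fin 4)) = a := by
          obtain ⟨a1, a2⟩ := a; simp only at h2 h3 ⊢
          rw [h2]
          congr 1
          exact Fin.ext h3
        rw [ea, eb, Sym2.eq_swap]
    · rintro ⟨t, h⟩
      have ht := t.isLt
      rw [← mem_edgeSet, ← h, psiE, mem_edgeSet]
      refine ⟨?_, Or.inl ⟨rfl, rfl, rfl⟩⟩
      intro hc
      have := congrArg (fun p : Fin k × Fin 4 => p.1.val) hc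
      simp only at this
      omega

lemma psiE_inj (k : ℕ) : Function.Injective (psiE k) := by
  intro t t' h
  rw [psiE, psiE, Sym2.eq_iff] at h
  rcases h with ⟨h1, _⟩ | ⟨h1, h2⟩
  · have := congrArg (fun p => (Prod.fst p : Fin k).val) h1
    simp only at this
    exact Fin.ext this
  · have e1 := congrArg (fun p => (Prod.fst p : Fin k).val) h1
    have e2 := congrArg (fun p => (Prod.fst p : Fin k).val) h2
    simp only at e1 e2
    exact Fin.ext (by omega)

lemma GE_card (k : ℕ) (hk : 0 < k) : (GE k).edgeSet.ncard = 5 * k - 1 := by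
  have hdisj : Disjoint (Set.range (phiE k)) (Set.range (psiE k)) := by
    rw [Set.disjoint_left]
    rintro e ⟨⟨i, x⟩, h1⟩ ⟨t, h2⟩
    rw [← h2, phiE, psiE, Sym2.eq_iff] at h1
    rcases h1 with ⟨ha, hb⟩ | ⟨ha, hb⟩ <;>
    · have e1 := congrArg (fun p => (Prod.fst p : Fin k).val) ha
      have e2 := congrArg (fun p => (Prod.fst p : Fin k).val) hb
      simp only at e1 e2
      omega
  have : (GE k).edgeSet = Set.range (phiE k) ∪ Set.range (psiE k) := by
    rw [GE, edgeSet_sup, copies_edgeSet, connE_edgeSet]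
  rw [this, Set.ncard_union_eq hdisj]
  rw [← Set.image_univ, ← Set.image_univ,
    Set.ncard_image_of_injective _ (phiE_inj k), Set.ncard_image_of_injective _ (psiE_inj k),
    Set.ncard_univ, Set.ncard_univ]
  simp only [Nat.card_eq_fintype_card, Fintype.card_prod, Fintype.card_fin]
  omega

lemma GE_connected (k : ℕ) (hk : 0 < k) : (GE k).Connected := by
  have hne : Nonempty (Fin k × Fin 4) := ⟨(⟨0, hk⟩, 0)⟩
  rw [connected_iff]
  refine ⟨?_, hne⟩
  have cadj : ∀ (i : Fin k) (a b : Fin 4), (cycleGraph 4).Adj a b → (GE k).Adj (i, a) (i, b) :=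
    fun i a b h => Or.inl ⟨rfl, h⟩
  have step1 : ∀ (i : Fin k) (x : Fin 4), (GE k).Reachable (i, x) (i, 0) := by
    intro i x
    fin_cases x
    · exact Reachable.refl _
    · exact (cadj i 1 0 (by decide)).reachable
    · exact (cadj i 2 1 (by decide)).reachable.trans (cadj i 1 0 (by decide)).reachable
    · exact (cadj i 3 0 (by decide)).reachable
  have step2 : ∀ m : ℕ, ∀ hm : m < k, (GE k).Reachable (⟨m, hm⟩, 0) (⟨0, hk⟩, 0) := by
    intro m
    induction m with
    | zero => intro hm; exact Reachable.refl _
    | succ p ih =>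
      intro hm
      have hadj : (GE k).Adj (⟨p + 1, hm⟩, 0) (⟨p, by omega⟩, 0) := by
        refine Or.inr ⟨?_, Or.inr ⟨rfl, rfl, rfl⟩⟩
        simp only [ne_eq, Prod.mk.injEq, Fin.mk.injEq]
        intro hc
        omega
      exact hadj.reachable.trans (ih (by omega))
  intro u v
  obtain ⟨ui, ux⟩ := u
  obtain ⟨vi, vx⟩ := v
  have hu := (step1 ui ux).trans (step2 ui.val ui.isLt)
  have hv := (step1 vi vx).trans (step2 vi.val vi.isLt)
  exact hu.trans hv.symm

lemma disjUnion_edgeSet {V W : Type*} (A : SimpleGraph V) (B : SimpleGraph W) :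
    (DisjUnion A B).edgeSet =
      Sym2.map Sum.inl '' A.edgeSet ∪ Sym2.map Sum.inr '' B.edgeSet := by
  ext e
  induction e using Sym2.ind with
  | _ a b =>
    constructor
    · intro h
      rcases a with x | x <;> rcases b with y | y
      · exact Or.inl ⟨s(x, y), h, rfl⟩
      · exact absurd h (by simp [DisjUnion])
      · exact absurd h (by simp [DisjUnion])
      · exact Or.inr ⟨s(x, y), h, rfl⟩
    · rintro (⟨e', he', hm⟩ | ⟨e', he', hm⟩)
      · induction e' using Sym2.ind with
        | _ u v =>
          rw [Sym2.map_pair_eq] at hm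
          rw [← hm, mem_edgeSet]
          exact A.mem_edgeSet.mp he'
      · induction e' using Sym2.ind with
        | _ u v =>
          rw [Sym2.map_pair_eq] at hm
          rw [← hm, mem_edgeSet]
          exact B.mem_edgeSet.mp he'


def connO (k : ℕ) : SimpleGraph ((Fin k × Fin 4) ⊕ Fin 3) :=
  fromRel (fun a b =>
    match a, b with
    | Sum.inl p, Sum.inl q => p.2 = 0 ∧ q.2 = 0 ∧ p.1.val + 1 = q.1.val
    | Sum.inl p, Sum.inr y => p.2 = 0 ∧ p.1.val + 1 = k ∧ y = 0
    | _, _ => False)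

def GO (k : ℕ) : SimpleGraph ((Fin k × Fin 4) ⊕ Fin 3) :=
  DisjUnion (Copies k (cycleGraph 4)) (pathGraph 3) ⊔ connO k

def psiO (k : ℕ) : Fin k → Sym2 ((Fin k × Fin 4) ⊕ Fin 3) :=
  fun t =>
    if h : t.val + 1 < k then
      s(Sum.inl ((⟨t.val, by omega⟩ : Fin k), 0), Sum.inl ((⟨t.val + 1, h⟩ : Fin k), 0))
    else s(Sum.inl ((⟨t.val, t.isLt⟩ : Fin k), 0), Sum.inr 0)

lemma path3_edgeSet : (pathGraph 3).edgeSet =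
    {s((0 : Fin 3), (1 : Fin 3)), s((1 : Fin 3), (2 : Fin 3))} := by
  ext e
  induction e using Sym2.ind with
  | _ a b =>
    simp only [mem_edgeSet, pathGraph_adj, Set.mem_insert_iff, Set.mem_singleton_iff]
    exact (by decide : ∀ a b : Fin 3, ((a.val + 1 = b.val ∨ b.val + 1 = a.val) ↔
      (s(a, b) = s((0 : Fin 3), (1 : Fin 3)) ∨ s(a, b) = s((1 : Fin 3), (2 : Fin 3))))) a b

lemma connO_edgeSet (k : ℕ) : (connO k).edgeSet = Set.range (psiO k) := by
  ext e
  induction e using Sym2.ind with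
  | _ a b =>
    simp only [mem_edgeSet, Set.mem_range]
    constructor
    · rw [connO, fromRel_adj]
      rintro ⟨hne, h | h⟩
      · rcases a with p | y <;> rcases b with q | y'
        · obtain ⟨h1, h2, h3⟩ := h
          have hq := q.1.isLt
          refine ⟨⟨p.1.val, by omega⟩, ?_⟩
          rw [psiO]
          rw [dif_pos (by omega : p.1.val + 1 < k)]
          have ea : (Sum.inl ((⟨p.1.val, by omega⟩ : Fin k), (0 : Fin 4)) :
              (Fin k × Fin 4) ⊕ Fin 3) = Sum.inl p := by
            congr 1
            obtain ⟨p1, p2⟩ := p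
            simp only at h1 ⊢
            rw [h1]
          have eb : (Sum.inl ((⟨p.1.val + 1, by omega⟩ : Fin k), (0 : Fin 4)) :
              (Fin k × Fin 4) ⊕ Fin 3) = Sum.inl q := by
            congr 1
            obtain ⟨q1, q2⟩ := q
            simp only at h2 h3 ⊢
            rw [h2]
            congr 1
            exact Fin.ext h3
          rw [ea, eb]
        · obtain ⟨h1, h2, h3⟩ := h
          refine ⟨⟨p.1.val, p.1.isLt⟩, ?_⟩
          rw [psiO]
          rw [dif_neg (by simp only; omega : ¬ ((⟨p.1.val, p.1.isLt⟩ : Fin k).val + 1 < k))]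
          have ea : (Sum.inl ((⟨p.1.val, p.1.isLt⟩ : Fin k), (0 : Fin 4)) :
              (Fin k × Fin 4) ⊕ Fin 3) = Sum.inl p := by
            congr 1
            obtain ⟨p1, p2⟩ := p
            simp only at h1 ⊢
            rw [h1]
          have eb : (Sum.inr (0 : Fin 3) : (Fin k × Fin 4) ⊕ Fin 3) = Sum.inr y' := by
            rw [h3]
          rw [ea, eb]
        · exact h.elim
        · exact h.elim
      · rcases b with p | y <;> rcases a with q | y'
        · obtain ⟨h1, h2, h3⟩ := h
          have hq := q.1.isLt
          refine ⟨⟨p.1.val, by omega⟩, ?_⟩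
          rw [psiO]
          rw [dif_pos (by omega : p.1.val + 1 < k)]
          have ea : (Sum.inl ((⟨p.1.val, by omega⟩ : Fin k), (0 : Fin 4)) :
              (Fin k × Fin 4) ⊕ Fin 3) = Sum.inl p := by
            congr 1
            obtain ⟨p1, p2⟩ := p
            simp only at h1 ⊢
            rw [h1]
          have eb : (Sum.inl ((⟨p.1.val + 1, by omega⟩ : Fin k), (0 : Fin 4)) :
              (Fin k × Fin 4) ⊕ Fin 3) = Sum.inl q := by
            congr 1
            obtain ⟨q1, q2⟩ := q
            simp only at h2 h3 ⊢
            rw [h2]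
            congr 1
            exact Fin.ext h3
          rw [ea, eb, Sym2.eq_swap]
        · obtain ⟨h1, h2, h3⟩ := h
          refine ⟨⟨p.1.val, p.1.isLt⟩, ?_⟩
          rw [psiO]
          rw [dif_neg (by simp only; omega : ¬ ((⟨p.1.val, p.1.isLt⟩ : Fin k).val + 1 < k))]
          have ea : (Sum.inl ((⟨p.1.val, p.1.isLt⟩ : Fin k), (0 : Fin 4)) :
              (Fin k × Fin 4) ⊕ Fin 3) = Sum.inl p := by
            congr 1
            obtain ⟨p1, p2⟩ := p
            simp only at h1 ⊢
            rw [h1]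
          have eb : (Sum.inr (0 : Fin 3) : (Fin k × Fin 4) ⊕ Fin 3) = Sum.inr y' := by
            rw [h3]
          rw [ea, eb, Sym2.eq_swap]
        · exact h.elim
        · exact h.elim
    · rintro ⟨t, h⟩
      have ht := t.isLt
      by_cases htk : t.val + 1 < k
      · rw [psiO, dif_pos htk] at h
        rw [← mem_edgeSet, ← h, mem_edgeSet, connO, fromRel_adj]
        refine ⟨?_, Or.inl ⟨rfl, rfl, rfl⟩⟩
        intro hc
        have := congrArg (fun x : (Fin k × Fin 4) ⊕ Fin 3 =>
          match x with | Sum.inl p => p.1.val | Sum.inr _ => 0) hc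
        simp only at this
        omega
      · rw [psiO, dif_neg htk] at h
        rw [← mem_edgeSet, ← h, mem_edgeSet, connO, fromRel_adj]
        refine ⟨?_, Or.inl ⟨rfl, by simp only; omega, rfl⟩⟩
        simp

lemma psiO_inj (k : ℕ) : Function.Injective (psiO k) := by
  intro t t' h
  have ht := t.isLt
  have ht' := t'.isLt
  by_cases h1 : t.val + 1 < k <;> by_cases h2 : t'.val + 1 < k
  · rw [psiO, psiO, dif_pos h1, dif_pos h2, Sym2.eq_iff] at h
    rcases h with ⟨ha, _⟩ | ⟨ha, hb⟩
    · have := congrArg (fun x : (Fin k × Fin 4) ⊕ Fin 3 =>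
        match x with | Sum.inl p => p.1.val | Sum.inr _ => 0) ha
      simp only at this
      exact Fin.ext this
    · have e1 := congrArg (fun x : (Fin k × Fin 4) ⊕ Fin 3 =>
        match x with | Sum.inl p => p.1.val | Sum.inr _ => 0) ha
      have e2 := congrArg (fun x : (Fin k × Fin 4) ⊕ Fin 3 =>
        match x with | Sum.inl p => p.1.val | Sum.inr _ => 0) hb
      simp only at e1 e2
      exact Fin.ext (by omega)
  · rw [psiO, psiO, dif_pos h1, dif_neg h2, Sym2.eq_iff] at h
    rcases h with ⟨-, hb⟩ | ⟨hb, -⟩ <;> simp at hb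
  · rw [psiO, psiO, dif_neg h1, dif_pos h2, Sym2.eq_iff] at h
    rcases h with ⟨-, hb⟩ | ⟨-, hb⟩ <;> simp at hb
  · exact Fin.ext (by omega)

lemma GO_card (k : ℕ) : (GO k).edgeSet.ncard = 5 * k + 2 := by
  classical
  set S1 : Set (Sym2 ((Fin k × Fin 4) ⊕ Fin 3)) :=
    Sym2.map Sum.inl '' (Copies k (cycleGraph 4)).edgeSet with hS1
  set S2 : Set (Sym2 ((Fin k × Fin 4) ⊕ Fin 3)) :=
    Sym2.map Sum.inr '' (pathGraph 3).edgeSet with hS2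
  set S3 : Set (Sym2 ((Fin k × Fin 4) ⊕ Fin 3)) := Set.range (psiO k) with hS3
  have hedge : (GO k).edgeSet = (S1 ∪ S2) ∪ S3 := by
    rw [GO, edgeSet_sup, disjUnion_edgeSet, connO_edgeSet]
  -- membership descriptions
  have memS1 : ∀ e ∈ S1, ∃ i : Fin k, ∃ x y : Fin 4,
      e = s((Sum.inl (i, x) : (Fin k × Fin 4) ⊕ Fin 3), Sum.inl (i, y)) := by
    rintro e ⟨e', he', hm⟩
    rw [copies_edgeSet] at he'
    obtain ⟨⟨i, x⟩, hp⟩ := he'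
    rw [phiE] at hp
    exact ⟨i, x, x + 1, by rw [← hm, ← hp, Sym2.map_pair_eq]⟩
  have memS2 : ∀ e ∈ S2, ∃ x y : Fin 3,
      e = s((Sum.inr x : (Fin k × Fin 4) ⊕ Fin 3), Sum.inr y) := by
    rintro e ⟨e', he', hm⟩
    induction e' using Sym2.ind with
    | _ u v => exact ⟨u, v, by rw [← hm, Sym2.map_pair_eq]⟩
  have d12 : Disjoint S1 S2 := by
    rw [Set.disjoint_left]
    intro e he1 he2
    obtain ⟨i, x, y, h1⟩ := memS1 e he1
    obtain ⟨u, v, h2⟩ := memS2 e he2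
    rw [h1, Sym2.eq_iff] at h2
    rcases h2 with ⟨ha, _⟩ | ⟨ha, _⟩ <;> exact absurd ha (by simp)
  have d3 : Disjoint (S1 ∪ S2) S3 := by
    rw [Set.disjoint_left]
    rintro e he ⟨t, hpsi⟩
    have ht := t.isLt
    rcases he with he | he
    · obtain ⟨i, x, y, h1⟩ := memS1 e he
      by_cases htk : t.val + 1 < k
      · rw [psiO, dif_pos htk, h1, Sym2.eq_iff] at hpsi
        rcases hpsi with ⟨ha, hb⟩ | ⟨ha, hb⟩ <;>
        · have e1 := congrArg (fun z : (Fin k × Fin 4) ⊕ Fin 3 =>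
            match z with | Sum.inl p => p.1.val | Sum.inr _ => 0) ha
          have e2 := congrArg (fun z : (Fin k × Fin 4) ⊕ Fin 3 =>
            match z with | Sum.inl p => p.1.val | Sum.inr _ => 0) hb
          simp only at e1 e2
          omega
      · rw [psiO, dif_neg htk, h1, Sym2.eq_iff] at hpsi
        rcases hpsi with ⟨-, hb⟩ | ⟨-, hb⟩ <;> simp at hb
    · obtain ⟨u, v, h1⟩ := memS2 e he
      by_cases htk : t.val + 1 < k
      · rw [psiO, dif_pos htk, h1, Sym2.eq_iff] at hpsi
        rcases hpsi with ⟨ha, _⟩ | ⟨ha, _⟩ <;> simp at ha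
      · rw [psiO, dif_neg htk, h1, Sym2.eq_iff] at hpsi
        rcases hpsi with ⟨ha, -⟩ | ⟨ha, -⟩ <;> simp at ha
  have c1 : S1.ncard = 4 * k := by
    rw [hS1, Set.ncard_image_of_injective _ (Sym2.map.injective Sum.inl_injective),
      copies_edgeSet, ← Set.image_univ, Set.ncard_image_of_injective _ (phiE_inj k),
      Set.ncard_univ]
    simp only [Nat.card_eq_fintype_card, Fintype.card_prod, Fintype.card_fin]
    omega
  have c2 : S2.ncard = 2 := by
    rw [hS2, Set.ncard_image_of_injective _ (Sym2.map.injective Sum.inr_injective),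
      path3_edgeSet]
    exact Set.ncard_pair (by decide)
  have c3 : S3.ncard = k := by
    rw [hS3, ← Set.image_univ, Set.ncard_image_of_injective _ (psiO_inj k), Set.ncard_univ]
    simp
  rw [hedge, Set.ncard_union_eq d3, Set.ncard_union_eq d12, c1, c2, c3]
  omega

lemma GO_connected (k : ℕ) : (GO k).Connected := by
  rw [connected_iff]
  refine ⟨?_, ⟨Sum.inr 0⟩⟩
  have cadj : ∀ (i : Fin k) (a b : Fin 4), (cycleGraph 4).Adj a b →
      (GO k).Adj (Sum.inl (i, a)) (Sum.inl (i, b)) :=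
    fun i a b h => Or.inl (show (Copies k (cycleGraph 4)).Adj (i, a) (i, b) from ⟨rfl, h⟩)
  have padj : ∀ a b : Fin 3, (pathGraph 3).Adj a b →
      (GO k).Adj (Sum.inr a) (Sum.inr b) := fun a b h => Or.inl h
  have step1 : ∀ (i : Fin k) (x : Fin 4),
      (GO k).Reachable (Sum.inl (i, x)) (Sum.inl (i, 0)) := by
    intro i x
    fin_cases x
    · exact Reachable.refl _
    · exact (cadj i 1 0 (by decide)).reachable
    · exact (cadj i 2 1 (by decide)).reachable.trans (cadj i 1 0 (by decide)).reachable
    · exact (cadj i 3 0 (by decide)).reachable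
  have step2 : ∀ m : ℕ, ∀ i : Fin k, k - 1 - i.val = m →
      (GO k).Reachable (Sum.inl (i, 0)) (Sum.inr 0) := by
    intro m
    induction m with
    | zero =>
      intro i hi
      have hik := i.isLt
      have hadj : (GO k).Adj (Sum.inl (i, 0)) (Sum.inr 0) := by
        refine Or.inr ⟨by simp, Or.inl ⟨rfl, (by omega : i.val + 1 = k), rfl⟩⟩
      exact hadj.reachable
    | succ p ih =>
      intro i hi
      have hik := i.isLt
      have hadj : (GO k).Adj (Sum.inl (i, 0)) (Sum.inl (⟨i.val + 1, by omega⟩, 0)) := by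
        refine Or.inr ⟨?_, Or.inl ⟨rfl, rfl, rfl⟩⟩
        intro hc
        have := congrArg (fun z : (Fin k × Fin 4) ⊕ Fin 3 =>
          match z with | Sum.inl q => q.1.val | Sum.inr _ => 0) hc
        simp only at this
        omega
      exact hadj.reachable.trans (ih ⟨i.val + 1, by omega⟩ (by simp only; omega))
  have base : ∀ v : (Fin k × Fin 4) ⊕ Fin 3, (GO k).Reachable v (Sum.inr 0) := by
    rintro (⟨i, x⟩ | y)
    · exact (step1 i x).trans (step2 (k - 1 - i.val) i rfl)
    · fin_cases y
      · exact Reachable.refl _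
      · exact (padj 1 0 (pathGraph_adj.mpr (by omega))).reachable
      · exact ((padj 2 1 (pathGraph_adj.mpr (by omega))).reachable).trans
          (padj 1 0 (pathGraph_adj.mpr (by omega))).reachable
  intro u v
  exact (base u).trans (base v).symm

end AuxProof

/-- For every positive integer `n` there is a connected graph with exactly
`⌊(5n−1)/2⌋` edges arrowing `(nK₂, P₃)`. Concretely: for even `n`, any connected graph obtained
from `n/2` disjoint copies of `C₄` by adding `n/2 − 1` edges (so that it is connected with
`⌊(5n−1)/2⌋` edges in total) has this property; for odd `n`, any connected graph obtained from
`(n−1)/2` disjoint copies of `C₄` together with one copy of `P₃` by adding `(n−1)/2` edges has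
this property. -/

theorem connected_graph_arrowing_matching_path3 (n : ℕ) (hn : 0 < n) :
    (∃ (V : Type) (G : SimpleGraph V), Finite V ∧ G.Connected ∧
        G.edgeSet.ncard = (5 * n - 1) / 2 ∧ Arrows G (Matching n) (pathGraph 3)) ∧
    (Even n → ∀ G : SimpleGraph (Fin (n / 2) × Fin 4),
        Copies (n / 2) (cycleGraph 4) ≤ G → G.Connected →
        G.edgeSet.ncard = (5 * n - 1) / 2 →
        Arrows G (Matching n) (pathGraph 3)) ∧
    (Odd n → ∀ G : SimpleGraph ((Fin ((n - 1) / 2) × Fin 4) ⊕ Fin 3),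
        DisjUnion (Copies ((n - 1) / 2) (cycleGraph 4)) (pathGraph 3) ≤ G → G.Connected →
        G.edgeSet.ncard = (5 * n - 1) / 2 →
        Arrows G (Matching n) (pathGraph 3)) := by
  refine ⟨?_, ?_, ?_⟩
  · rcases Nat.even_or_odd n with hE | hO
    · have hk : n = 2 * (n / 2) := by obtain ⟨t, ht⟩ := hE; omega
      refine ⟨Fin (n / 2) × Fin 4, GE (n / 2), inferInstance,
        GE_connected _ (by omega), ?_, arrowsEven hk _ le_sup_left⟩
      rw [GE_card _ (by omega)]
      omega
    · have hk : n = 2 * ((n - 1) / 2) + 1 := by obtain ⟨t, ht⟩ := hO; omega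
      refine ⟨(Fin ((n - 1) / 2) × Fin 4) ⊕ Fin 3, GO ((n - 1) / 2), inferInstance,
        GO_connected _, ?_, arrowsOdd hk _ le_sup_left⟩
      rw [GO_card]
      omega
  · intro hEven G hle _ _
    exact arrowsEven (by obtain ⟨t, ht⟩ := hEven; omega) G hle
  · intro hOdd G hle _ _
    exact arrowsOdd (by obtain ⟨t, ht⟩ := hOdd; omega) G hle
end

section
/- For every positive integer n there exists a connected graph H with exactly 4n−1 edges such that H → (nK₂, C₃); concretely, any connected graph obtained from n disjoint triangles by adding n−1 edges has this property. -/
open SimpleGraph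

open SimpleGraph

lemma cycle3_adj_iff : ∀ a b : Fin 3, (cycleGraph 3).Adj a b ↔ a ≠ b := by decide

lemma key {n : ℕ} (H : SimpleGraph (Fin n × Fin 3))
    (h : Copies n (cycleGraph 3) ≤ H) : Arrows H (Matching n) (cycleGraph 3) := by
  intro R hR
  by_cases hb : ∃ i : Fin n, ∀ a b : Fin 3, a ≠ b → ¬ R.Adj (i, a) (i, b)
  · right
    obtain ⟨i, hi⟩ := hb
    refine ⟨⟨fun v => (i, v), ?_⟩, fun x y hxy => (Prod.ext_iff.mp hxy).2⟩
    intro a b hab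
    exact ⟨h ⟨rfl, hab⟩, hi a b hab.ne⟩
  · left
    push_neg at hb
    choose a b hab hRadj using hb
    refine ⟨⟨fun p => (p.1, if p.2 = 0 then a p.1 else b p.1), ?_⟩, ?_⟩
    · rintro ⟨i, j⟩ ⟨i', j'⟩ ⟨h1, h2⟩
      simp only at h1 h2 ⊢
      subst h1
      fin_cases j <;> fin_cases j' <;> simp_all <;>
        first | exact hRadj i | exact (hRadj i).symm
    · rintro ⟨i, j⟩ ⟨i', j'⟩ hxy
      have h1 : i = i' := congrArg Prod.fst hxy
      subst h1
      have h2 := congrArg Prod.snd hxy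
      change (if j = 0 then _ else _) = (if j' = 0 then _ else _) at h2
      have hj : j = j' := by
        by_contra hne
        fin_cases j <;> fin_cases j' <;> simp at h2 hne ⊢ <;>
          first | exact hab i h2 | exact hab i h2.symm
      rw [hj]
private def tEdge (m : ℕ) : (Fin (m+1) × Fin 3) ⊕ Fin m → Sym2 (Fin (m+1) × Fin 3)
  | Sum.inl (i, k) => s((i, k), (i, k+1))
  | Sum.inr j => s(((0 : Fin (m+1)), (0 : Fin 3)), (j.succ, 0))

private lemma fin3_pair : ∀ a b : Fin 3, a ≠ b →
    ∃ k : Fin 3, (a = k ∧ b = k + 1) ∨ (a = k + 1 ∧ b = k) := by decide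

private lemma fin3_succ_ne : ∀ k : Fin 3, k ≠ k + 1 := by decide

private lemma fin3_no01 : ∀ k : Fin 3, ¬(k = 0 ∧ k + 1 = 0) := by decide

private lemma fin3_nocross : ∀ k k' : Fin 3, ¬(k = k' + 1 ∧ k + 1 = k') := by decide

private lemma tEdge_inj (m : ℕ) : Function.Injective (tEdge m) := by
  rintro (⟨i, k⟩ | j) (⟨i', k'⟩ | j') h <;>
    simp only [tEdge, Sym2.eq_iff, Prod.mk.injEq] at h
  · rcases h with ⟨⟨h1, h2⟩, _, h4⟩ | ⟨⟨h1, h2⟩, _, h4⟩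
    · simp [h1, h2]
    · exact absurd ⟨h2, h4⟩ (fin3_nocross k k')
  · rcases h with ⟨⟨_, h2⟩, _, h4⟩ | ⟨⟨_, h2⟩, _, h4⟩
    · exact absurd ⟨h2, h4⟩ (fin3_no01 k)
    · exact absurd ⟨h2, h4⟩ (fin3_no01 k)
  · rcases h with ⟨⟨_, h2⟩, _, h4⟩ | ⟨⟨_, h2⟩, _, h4⟩
    · exact absurd ⟨h2.symm, h4.symm⟩ (fin3_no01 k')
    · exact absurd ⟨h4.symm, h2.symm⟩ (fin3_no01 k')
  · rcases h with ⟨_, h2, _⟩ | ⟨⟨h1, _⟩, _⟩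
    · simp [Fin.succ_inj.mp h2]
    · exact absurd h1.symm (Fin.succ_ne_zero j')

private lemma tGraph_copies_le (m : ℕ) :
    Copies (m+1) (cycleGraph 3) ≤ fromEdgeSet (Set.range (tEdge m)) := by
  rintro ⟨i, a⟩ ⟨i', b⟩ ⟨h1, h2⟩
  simp only at h1; subst h1
  have hab : a ≠ b := h2.ne
  rw [fromEdgeSet_adj]
  refine ⟨?_, by simp [hab]⟩
  obtain ⟨k, hk | hk⟩ := fin3_pair a b hab
  · exact ⟨Sum.inl (i, k), by simp [tEdge, hk.1, hk.2]⟩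
  · exact ⟨Sum.inl (i, k), by rw [tEdge, Sym2.eq_swap]; simp [hk.1, hk.2]⟩

private lemma tGraph_adj_of_mem {m : ℕ} {x y : Fin (m+1) × Fin 3} (hne : x ≠ y)
    (hmem : s(x, y) ∈ Set.range (tEdge m)) :
    (fromEdgeSet (Set.range (tEdge m))).Adj x y := by
  rw [fromEdgeSet_adj]; exact ⟨hmem, hne⟩

private lemma tGraph_connected (m : ℕ) :
    (fromEdgeSet (Set.range (tEdge m))).Connected := by
  rw [connected_iff]
  refine ⟨?_, ⟨((0 : Fin (m+1)), (0 : Fin 3))⟩⟩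
  have base : ∀ v : Fin (m+1) × Fin 3,
      (fromEdgeSet (Set.range (tEdge m))).Reachable v ((0 : Fin (m+1)), (0 : Fin 3)) := by
    rintro ⟨i, a⟩
    have step1 : (fromEdgeSet (Set.range (tEdge m))).Reachable (i, a) (i, 0) := by
      by_cases ha : a = (0 : Fin 3)
      · rw [ha]
      · refine (tGraph_adj_of_mem (by simp [ha]) ?_).reachable
        obtain ⟨k, hk | hk⟩ := fin3_pair a 0 ha
        · exact ⟨Sum.inl (i, k), by simp [tEdge, hk.1, hk.2]⟩
        · exact ⟨Sum.inl (i, k), by rw [tEdge, Sym2.eq_swap]; simp [hk.1, hk.2]⟩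
    refine step1.trans ?_
    by_cases hi : i = (0 : Fin (m+1))
    · rw [hi]
    · obtain ⟨j, rfl⟩ := Fin.eq_succ_of_ne_zero hi
      refine (tGraph_adj_of_mem ?_ ?_).symm.reachable.symm
      · simp [Fin.succ_ne_zero j, Prod.ext_iff, (Fin.succ_ne_zero j).symm]
      · exact ⟨Sum.inr j, by simp [tEdge, Sym2.eq_swap]⟩
  exact fun u v => (base u).trans (base v).symm

private lemma tGraph_ncard (m : ℕ) :
    (fromEdgeSet (Set.range (tEdge m))).edgeSet.ncard = 4 * (m + 1) - 1 := by
  rw [edgeSet_fromEdgeSet]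
  have hnd : ∀ x, ¬ (tEdge m x).IsDiag := by
    rintro (⟨i, k⟩ | j) hd <;> rw [tEdge, Sym2.isDiag_iff_proj_eq] at hd
    · exact fin3_succ_ne k (congrArg Prod.snd hd)
    · exact (Fin.succ_ne_zero j) (congrArg Prod.fst hd).symm
  have hdiag : Set.range (tEdge m) \ {e | e.IsDiag} = Set.range (tEdge m) := by
    ext e
    constructor
    · rintro ⟨he, _⟩; exact he
    · rintro ⟨x, rfl⟩; exact ⟨⟨x, rfl⟩, hnd x⟩
  rw [Sym2.diagSet_eq_setOfPred_isDiag, hdiag, ← Nat.card_coe_set_eq, Nat.card_range_of_injective (tEdge_inj m)]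
  simp [Nat.card_eq_fintype_card]
  omega
/-- For every positive integer `n` there is a connected graph with exactly
`4n−1` edges arrowing `(nK₂, C₃)`; concretely, any connected graph obtained from `n` disjoint
triangles by adding `n−1` edges (so that it is connected with `4n−1` edges in total) has this
property. -/
theorem connected_graph_arrowing_matching_triangle (n : ℕ) (hn : 0 < n) :
    (∃ (V : Type) (H : SimpleGraph V), Finite V ∧ H.Connected ∧
        H.edgeSet.ncard = 4 * n - 1 ∧ Arrows H (Matching n) (cycleGraph 3)) ∧
    (∀ H : SimpleGraph (Fin n × Fin 3),
        Copies n (cycleGraph 3) ≤ H → H.Connected → H.edgeSet.ncard = 4 * n - 1 →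
        Arrows H (Matching n) (cycleGraph 3)) := by
  obtain ⟨m, rfl⟩ : ∃ m, n = m + 1 := ⟨n - 1, (Nat.succ_pred_eq_of_pos hn).symm⟩
  refine ⟨⟨Fin (m+1) × Fin 3, fromEdgeSet (Set.range (tEdge m)), inferInstance,
    tGraph_connected m, tGraph_ncard m, key _ (tGraph_copies_le m)⟩,
    fun H hle _ _ => key H hle⟩
end

section
/- Let n be a positive integer and let G be a connected graph with at most ⌊(5n−3)/2⌋ edges such that G → (nK₂, P₃), and suppose that for every positive integer k < n, every connected graph with at most ⌊(5k−3)/2⌋ edges does not arrow (kK₂, P₃). Then every non-cut vertex of G (a vertex whose deletion leaves a connected graph) has degree at most two in G. -/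
open SimpleGraph

/-- If `G` is a connected graph with at most `⌊(5n−3)/2⌋` edges arrowing
`(nK₂, P₃)`, and for every positive `k < n` every connected graph with at most `⌊(5k−3)/2⌋`
edges does not arrow `(kK₂, P₃)`, then every non-cut vertex of `G` has degree at most two. -/
theorem noncut_vertex_degree_le_two (n : ℕ) (hn : 0 < n) (V : Type) [Finite V]
    (G : SimpleGraph V) (hconn : G.Connected) (hE : G.edgeSet.ncard ≤ (5 * n - 3) / 2)
    (harrow : Arrows G (Matching n) (pathGraph 3))
    (hmin : ∀ k : ℕ, 0 < k → k < n → ∀ (W : Type), Finite W → ∀ H : SimpleGraph W,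
      H.Connected → H.edgeSet.ncard ≤ (5 * k - 3) / 2 →
      ¬ Arrows H (Matching k) (pathGraph 3)) :
    ∀ v : V, (G.induce {w | w ≠ v}).Connected → (G.neighborSet v).ncard ≤ 2 := by
  classical
  intro v hv
  by_contra hdeg
  push_neg at hdeg
  -- the incidence set has the same cardinality as the neighbor set
  have hI : (G.incidenceSet v).ncard = (G.neighborSet v).ncard := by
    rw [← Nat.card_coe_set_eq, ← Nat.card_coe_set_eq]
    exact Nat.card_congr (G.incidenceSetEquivNeighborSet v)
  have hEfin : G.edgeSet.Finite := Set.toFinite _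
  have hIE : (G.incidenceSet v).ncard ≤ G.edgeSet.ncard :=
    Set.ncard_le_ncard (G.incidenceSet_subset v) hEfin
  rcases Nat.lt_or_ge n 2 with hn1 | hn2
  · omega
  -- set-up
  set S : Set V := {w | w ≠ v} with hS
  set G' : SimpleGraph S := G.induce S with hG'
  -- edge counting: edges of G' inject into edges of G avoiding v
  have hEsub : Sym2.map (Subtype.val : S → V) '' G'.edgeSet
      ⊆ G.edgeSet \ G.incidenceSet v := by
    rintro e ⟨e', he', rfl⟩
    induction e' with
    | _ x y =>
      refine ⟨he', fun hmem => ?_⟩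
      have hve : v ∈ Sym2.map (Subtype.val : S → V) s(x, y) := hmem.2
      simp only [Sym2.map_pair_eq, Sym2.mem_iff] at hve
      rcases hve with h | h
      · exact x.2 h.symm
      · exact y.2 h.symm
  have hE' : G'.edgeSet.ncard ≤ G.edgeSet.ncard - (G.incidenceSet v).ncard := by
    have h1 : (Sym2.map (Subtype.val : S → V) '' G'.edgeSet).ncard = G'.edgeSet.ncard :=
      Set.ncard_image_of_injective _ (Sym2.map.injective Subtype.val_injective)
    have h2 : (Sym2.map (Subtype.val : S → V) '' G'.edgeSet).ncard
        ≤ (G.edgeSet \ G.incidenceSet v).ncard :=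
      Set.ncard_le_ncard hEsub (hEfin.diff)
    rw [Set.ncard_diff (G.incidenceSet_subset v) (Set.toFinite _)] at h2
    omega
  have hE'' : G'.edgeSet.ncard ≤ (5 * (n - 1) - 3) / 2 := by omega
  -- now show G' arrows ((n-1)K₂, P₃)
  have harr' : Arrows G' (Matching (n - 1)) (pathGraph 3) := by
    intro R' hR'
    -- the red graph on V : R' lifted, plus all edges at v
    set emb : S ↪ V := Function.Embedding.subtype _ with hemb
    set atV : SimpleGraph V :=
      { Adj := fun a b => G.Adj a b ∧ (a = v ∨ b = v)
        symm := by constructor; rintro a b ⟨h1, h2⟩; exact ⟨h1.symm, h2.symm⟩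
        loopless := by constructor; rintro a ⟨h1, _⟩; exact G.loopless.irrefl a h1 } with hatV
    set R : SimpleGraph V := R'.map emb ⊔ atV with hR
    have hRle : R ≤ G := by
      refine sup_le ?_ ?_
      · rintro a b ⟨_, x, y, hxy, rfl, rfl⟩
        exact hR' hxy
      · rintro a b ⟨h1, _⟩
        exact h1
    -- conversion of red adjacency away from v
    have hconv : ∀ a b : S, R.Adj ↑a ↑b → R'.Adj a b := by
      rintro a b (⟨_, x, y, hxy, hx, hy⟩ | ⟨_, h | h⟩)
      · have hxa : x = a := Subtype.ext hx
        have hyb : y = b := Subtype.ext hy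
        rw [← hxa, ← hyb]; exact hxy
      · exact absurd h a.2
      · exact absurd h b.2
    rcases harrow R hRle with ⟨f, hf⟩ | ⟨f, hf⟩
    · -- red matching of size n; drop at most one edge through v
      left
      have hbad : ∃ i₀ : Fin n, ∀ i : Fin n, (f (i, 0) = v ∨ f (i, 1) = v) → i = i₀ := by
        by_cases h : ∃ i : Fin n, f (i, 0) = v ∨ f (i, 1) = v
        · obtain ⟨i₀, hi₀⟩ := h
          refine ⟨i₀, fun i hi => ?_⟩
          have key : ∀ (a b : Fin 2), f (i, a) = v → f (i₀, b) = v → i = i₀ := by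
            intro a b h1 h2
            have := hf (h1.trans h2.symm)
            exact congrArg Prod.fst this
          rcases hi with h1 | h1 <;> rcases hi₀ with h2 | h2 <;> exact key _ _ h1 h2
        · exact ⟨⟨0, by omega⟩, fun i hi => absurd ⟨i, hi⟩ h⟩
      obtain ⟨i₀, huniq⟩ := hbad
      set g : Fin (n - 1) → Fin n := fun k =>
        if (k : ℕ) < (i₀ : ℕ) then ⟨k, by omega⟩ else ⟨(k : ℕ) + 1, by have := k.2; omega⟩
        with hg
      have hg_ne : ∀ k, g k ≠ i₀ := by
        intro k
        simp only [hg]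
        split_ifs with h <;> (intro hc; have := congrArg Fin.val hc; simp at this; omega)
      have hg_inj : Function.Injective g := by
        intro a b hab
        have := congrArg Fin.val hab
        simp only [hg] at this
        split_ifs at this <;> (apply Fin.ext; simp at this; omega)
      have hne : ∀ (k : Fin (n - 1)) (j : Fin 2), f (g k, j) ≠ v := by
        intro k j heq
        apply hg_ne k
        apply huniq
        fin_cases j
        · exact Or.inl heq
        · exact Or.inr heq
      refine ⟨⟨fun p => ⟨f (g p.1, p.2), hne p.1 p.2⟩, ?_⟩, ?_⟩
      · rintro ⟨p1, p2⟩ ⟨q1, q2⟩ ⟨h1, h2⟩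
        apply hconv
        exact f.map_rel ⟨congrArg g h1, h2⟩
      · rintro ⟨p1, p2⟩ ⟨q1, q2⟩ hpq
        have h1 : f (g p1, p2) = f (g q1, q2) := congrArg Subtype.val hpq
        have h2 := hf h1
        have h3 : g p1 = g q1 := congrArg Prod.fst h2
        have h4 : p2 = q2 := congrArg Prod.snd h2
        exact Prod.ext (hg_inj h3) h4
    · -- blue P₃ avoids v
      right
      have hadj3 : ∀ x : Fin 3, ∃ y : Fin 3, (pathGraph 3).Adj x y := by
        intro x
        rcases Nat.eq_zero_or_pos x.val with h | h
        · exact ⟨⟨1, by omega⟩, by rw [pathGraph_adj]; left; show x.val + 1 = 1; omega⟩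
        · exact ⟨⟨x.val - 1, by have := x.2; omega⟩, by rw [pathGraph_adj]; right; show x.val - 1 + 1 = x.val; omega⟩
      have hnotv : ∀ x : Fin 3, f x ≠ v := by
        intro x heq
        obtain ⟨y, hy⟩ := hadj3 x
        have hb := f.map_rel hy
        exact hb.2 (Or.inr ⟨hb.1, Or.inl heq⟩)
      refine ⟨⟨fun x => ⟨f x, hnotv x⟩, ?_⟩, ?_⟩
      · intro a b hab
        have hb := f.map_rel hab
        refine ⟨hb.1, fun hR'ab => ?_⟩
        exact hb.2 (Or.inl ⟨hb.1.ne, ⟨f a, hnotv a⟩, ⟨f b, hnotv b⟩, hR'ab, rfl, rfl⟩)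
      · intro a b hab
        exact hf (congrArg Subtype.val hab)
  exact hmin (n - 1) (by omega) (by omega) S inferInstance G' hv hE'' harr'
end
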